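/- Let S and T be disjoint finite sets of odd primes, d₁ = ∏_{p∈S} p* and d₂ = ∏_{q∈T} q* with d₁ > 0 and d₂ > 0, where p* = (−1)^{(p−1)/2}·p. If Δ(d₁,d₂) = −1, then there is no number field L such that: L is Galois over ℚ with Galois group Gal(L/ℚ) isomorphic to the quaternion group Q₈ of order 8, the discriminant of L is odd, and L contains elements x, y with x² = d₁ and y² = d₂ (equivalently, ℚ(√d₁, √d₂) ⊆ L). -/

import Mathlib

private lemma zmod_aniso {p : ℕ} [Fact p.Prime] {d u v : ZMod p} (hd : ¬ IsSquare d)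
    (h : u ^ 2 = d * v ^ 2) : u = 0 ∧ v = 0 := by
  by_cases hv : v = 0
  · subst hv
    refine ⟨?_, rfl⟩
    have : u ^ 2 = 0 := by rw [h]; ring
    exact pow_eq_zero_iff (n := 2) (by norm_num) |>.mp this
  · exfalso
    exact hd ⟨u * v⁻¹, by field_simp; linear_combination -h⟩

private lemma key_int (p : ℕ) [hp : Fact p.Prime] (e d2 : ℤ)
    (hpe : ¬ ((p : ℤ) ∣ e)) (hpd2 : ¬ ((p : ℤ) ∣ d2))
    (hns : ¬ IsSquare ((-d2 : ℤ) : ZMod p)) :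
    ∀ (n : ℕ) (A0 A1 A2 A3 s B0 B1 B2 B3 t : ℤ), s.natAbs + t.natAbs ≤ n → s ≠ 0 → t ≠ 0 →
    A0^2 + ((p:ℤ)*e)*A1^2 - d2*A2^2 - ((p:ℤ)*e)*d2*A3^2 = -s^2 →
    B0^2 - ((p:ℤ)*e)*B1^2 + d2*B2^2 - ((p:ℤ)*e)*d2*B3^2 = -t^2 →
    A0*B0 = ((p:ℤ)*e)*d2*A3*B3 →
    A0*B1 = d2*A3*B2 →
    A2*B0 = ((p:ℤ)*e)*A1*B3 →
    A2*B1 = A1*B2 → False := by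
  have hp0 : (p : ℤ) ≠ 0 := by exact_mod_cast hp.out.ne_zero
  have hp2 : 2 ≤ p := hp.out.two_le
  have hcast : ∀ z : ℤ, ((z : ZMod p) = 0) ↔ (p : ℤ) ∣ z := fun z =>
    ZMod.intCast_zmod_eq_zero_iff_dvd z p
  -- the residue of d2 is nonzero and -d2 is a nonsquare residue
  have hd2cast : ((d2 : ZMod p)) ≠ 0 := fun h => hpd2 ((hcast d2).mp h)
  have hnsd : ¬ IsSquare (-(d2 : ZMod p)) := by
    intro h; apply hns; convert h using 1; push_cast; ring
  have hecast : ((e : ZMod p)) ≠ 0 := fun h => hpe ((hcast e).mp h)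
  intro n
  induction n with
  | zero =>
    intro A0 A1 A2 A3 s B0 B1 B2 B3 t hm hs ht _ _ _ _ _ _
    have : 1 ≤ s.natAbs := Int.natAbs_pos.mpr hs
    omega
  | succ n ih =>
    intro A0 A1 A2 A3 s B0 B1 B2 B3 t hm hs ht eq1 eq3 eq5 eq6 eq7 eq8
    by_cases hallA : (p:ℤ) ∣ A0 ∧ (p:ℤ) ∣ A1 ∧ (p:ℤ) ∣ A2 ∧ (p:ℤ) ∣ A3 ∧ (p:ℤ) ∣ s
    · obtain ⟨⟨a0, rfl⟩, ⟨a1, rfl⟩, ⟨a2, rfl⟩, ⟨a3, rfl⟩, ⟨s', rfl⟩⟩ := hallA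
      have hs' : s' ≠ 0 := by rintro rfl; simp at hs
      refine ih a0 a1 a2 a3 s' B0 B1 B2 B3 t ?_ hs' ht ?_ eq3 ?_ ?_ ?_ ?_
      · have h1 : ((p:ℤ) * s').natAbs = p * s'.natAbs := by
          rw [Int.natAbs_mul]; simp
        have h2 : 1 ≤ s'.natAbs := Int.natAbs_pos.mpr hs'
        have := hm
        rw [h1] at this
        nlinarith
      · apply mul_left_cancel₀ (pow_ne_zero 2 hp0); linear_combination eq1
      · apply mul_left_cancel₀ hp0; linear_combination eq5
      · apply mul_left_cancel₀ hp0; linear_combination eq6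
      · apply mul_left_cancel₀ hp0; linear_combination eq7
      · apply mul_left_cancel₀ hp0; linear_combination eq8
    by_cases hallB : (p:ℤ) ∣ B0 ∧ (p:ℤ) ∣ B1 ∧ (p:ℤ) ∣ B2 ∧ (p:ℤ) ∣ B3 ∧ (p:ℤ) ∣ t
    · obtain ⟨⟨b0, rfl⟩, ⟨b1, rfl⟩, ⟨b2, rfl⟩, ⟨b3, rfl⟩, ⟨t', rfl⟩⟩ := hallB
      have ht' : t' ≠ 0 := by rintro rfl; simp at ht
      refine ih A0 A1 A2 A3 s b0 b1 b2 b3 t' ?_ hs ht' eq1 ?_ ?_ ?_ ?_ ?_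
      · have h1 : ((p:ℤ) * t').natAbs = p * t'.natAbs := by
          rw [Int.natAbs_mul]; simp
        have h2 : 1 ≤ t'.natAbs := Int.natAbs_pos.mpr ht'
        have := hm
        rw [h1] at this
        nlinarith
      · apply mul_left_cancel₀ (pow_ne_zero 2 hp0); linear_combination eq3
      · apply mul_left_cancel₀ hp0; linear_combination eq5
      · apply mul_left_cancel₀ hp0; linear_combination eq6
      · apply mul_left_cancel₀ hp0; linear_combination eq7
      · apply mul_left_cancel₀ hp0; linear_combination eq8
    -- now the contradiction cases
    -- cast eq3 to ZMod p
    have c3 : (B0 : ZMod p)^2 + (d2 : ZMod p) * (B2 : ZMod p)^2 = -(t : ZMod p)^2 := by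
      have h := congrArg (fun z : ℤ => (z : ZMod p)) eq3
      push_cast at h
      rw [ZMod.natCast_self] at h
      linear_combination h
    -- claim1 : ¬ (p ∣ B0 ∧ p ∣ B2)
    have claim1 : ¬ ((p:ℤ) ∣ B0 ∧ (p:ℤ) ∣ B2) := by
      rintro ⟨hB0, hB2⟩
      have hBt : (p:ℤ) ∣ t := by
        rw [← hcast] at hB0 hB2 ⊢
        have : (t : ZMod p)^2 = 0 := by rw [← neg_eq_zero, ← c3, hB0, hB2]; ring
        exact pow_eq_zero_iff (n := 2) (by norm_num) |>.mp this
      obtain ⟨b0, rfl⟩ := hB0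
      obtain ⟨b2, rfl⟩ := hB2
      obtain ⟨t', rfl⟩ := hBt
      -- divide eq3 by p
      have e3' : (p:ℤ)*b0^2 - e*B1^2 + d2*(p:ℤ)*b2^2 - e*d2*B3^2 = -(p:ℤ)*t'^2 := by
        apply mul_left_cancel₀ hp0; linear_combination eq3
      have c3' : (e : ZMod p) * ((B1 : ZMod p)^2 + (d2 : ZMod p) * (B3 : ZMod p)^2) = 0 := by
        have h := congrArg (fun z : ℤ => (z : ZMod p)) e3'
        push_cast at h
        rw [ZMod.natCast_self] at h
        linear_combination -h
      have c3'' : (B1 : ZMod p)^2 = (-(d2 : ZMod p)) * (B3 : ZMod p)^2 := by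
        have := (mul_eq_zero.mp c3').resolve_left hecast
        linear_combination this
      obtain ⟨h1, h3⟩ := zmod_aniso hnsd c3''
      exact hallB ⟨⟨b0, rfl⟩, (hcast _).mp h1, ⟨b2, rfl⟩, (hcast _).mp h3, ⟨t', rfl⟩⟩
    -- claim2 : ¬ p ∣ t
    have claim2 : ¬ (p:ℤ) ∣ t := by
      intro hBt
      have ht0 : (t : ZMod p) = 0 := (hcast t).mpr hBt
      have : (B0 : ZMod p)^2 = (-(d2 : ZMod p)) * (B2 : ZMod p)^2 := by
        rw [ht0] at c3; linear_combination c3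
      obtain ⟨h0, h2⟩ := zmod_aniso hnsd this
      exact claim1 ⟨(hcast _).mp h0, (hcast _).mp h2⟩
    -- claim3 : ¬ p ∣ B0
    have claim3 : ¬ (p:ℤ) ∣ B0 := by
      intro hB0
      have h0 : (B0 : ZMod p) = 0 := (hcast B0).mpr hB0
      have : (t : ZMod p)^2 = (-(d2 : ZMod p)) * (B2 : ZMod p)^2 := by
        rw [h0] at c3; linear_combination c3
      obtain ⟨h1, _⟩ := zmod_aniso hnsd this
      exact claim2 ((hcast t).mp h1)
    have hB0cast : (B0 : ZMod p) ≠ 0 := fun h => claim3 ((hcast B0).mp h)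
    -- from eq5, eq7 : p ∣ A0, p ∣ A2
    have hA0 : (p:ℤ) ∣ A0 := by
      rw [← hcast]
      have h := congrArg (fun z : ℤ => (z : ZMod p)) eq5
      push_cast at h
      rw [ZMod.natCast_self] at h
      simp only [zero_mul, mul_zero] at h
      rcases mul_eq_zero.mp (by linear_combination h :
        (A0 : ZMod p) * (B0 : ZMod p) = 0) with h' | h'
      · exact h'
      · exact absurd h' hB0cast
    have hA2 : (p:ℤ) ∣ A2 := by
      rw [← hcast]
      have h := congrArg (fun z : ℤ => (z : ZMod p)) eq7
      push_cast at h
      rw [ZMod.natCast_self] at h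
      simp only [zero_mul, mul_zero] at h
      rcases mul_eq_zero.mp (by linear_combination h :
        (A2 : ZMod p) * (B0 : ZMod p) = 0) with h' | h'
      · exact h'
      · exact absurd h' hB0cast
    by_cases hB2 : (p:ℤ) ∣ B2
    · -- IsSquare (-1), hence d2 is a nonsquare; use eq1 with mod p^2 argument
      have hB2cast : (B2 : ZMod p) = 0 := (hcast B2).mpr hB2
      have htcast : (t : ZMod p) ≠ 0 := fun h => claim2 ((hcast t).mp h)
      have hsq : IsSquare (-1 : ZMod p) := by
        refine ⟨(B0 : ZMod p) * (t : ZMod p)⁻¹, ?_⟩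
        have hB0sq : (B0 : ZMod p)^2 = -(t : ZMod p)^2 := by
          rw [hB2cast] at c3; linear_combination c3
        field_simp
        linear_combination -hB0sq
      have hnsd2 : ¬ IsSquare ((d2 : ZMod p)) := by
        rintro ⟨r, hr⟩
        obtain ⟨w, hw⟩ := hsq
        exact hnsd ⟨r * w, by rw [hr]; linear_combination (r*r) * hw⟩
      -- eq1 mod p : p ∣ s
      have hA0cast : (A0 : ZMod p) = 0 := (hcast A0).mpr hA0
      have hA2cast : (A2 : ZMod p) = 0 := (hcast A2).mpr hA2
      have hps : (p:ℤ) ∣ s := by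
        rw [← hcast]
        have h := congrArg (fun z : ℤ => (z : ZMod p)) eq1
        push_cast at h
        rw [ZMod.natCast_self, hA0cast, hA2cast] at h
        have : (s : ZMod p)^2 = 0 := by linear_combination h
        exact pow_eq_zero_iff (n := 2) (by norm_num) |>.mp this
      obtain ⟨a0, rfl⟩ := hA0
      obtain ⟨a2, rfl⟩ := hA2
      obtain ⟨s', rfl⟩ := hps
      have e1' : (p:ℤ)*a0^2 + e*A1^2 - d2*(p:ℤ)*a2^2 - e*d2*A3^2 = -(p:ℤ)*s'^2 := by
        apply mul_left_cancel₀ hp0; linear_combination eq1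
      have c1' : (e : ZMod p) * ((A1 : ZMod p)^2 - (d2 : ZMod p) * (A3 : ZMod p)^2) = 0 := by
        have h := congrArg (fun z : ℤ => (z : ZMod p)) e1'
        push_cast at h
        rw [ZMod.natCast_self] at h
        linear_combination h
      have c1'' : (A1 : ZMod p)^2 = (d2 : ZMod p) * (A3 : ZMod p)^2 := by
        have := (mul_eq_zero.mp c1').resolve_left hecast
        linear_combination this
      obtain ⟨h1, h3⟩ := zmod_aniso hnsd2 c1''
      exact hallA ⟨⟨a0, rfl⟩, (hcast _).mp h1, ⟨a2, rfl⟩, (hcast _).mp h3, ⟨s', rfl⟩⟩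
    · -- p ∤ B2 : from eq6, eq8 get p ∣ A3, p ∣ A1, then p ∣ s, contradiction with hallA
      have hB2cast : (B2 : ZMod p) ≠ 0 := fun h => hB2 ((hcast B2).mp h)
      have hA0cast : (A0 : ZMod p) = 0 := (hcast A0).mpr hA0
      have hA2cast : (A2 : ZMod p) = 0 := (hcast A2).mpr hA2
      have hA3 : (p:ℤ) ∣ A3 := by
        rw [← hcast]
        have h := congrArg (fun z : ℤ => (z : ZMod p)) eq6
        push_cast at h
        rw [hA0cast] at h
        have h' : (d2 : ZMod p) * ((A3 : ZMod p) * (B2 : ZMod p)) = 0 := by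
          linear_combination -h
        rcases mul_eq_zero.mp h' with h'' | h''
        · exact absurd h'' hd2cast
        · exact (mul_eq_zero.mp h'').resolve_right hB2cast
      have hA1 : (p:ℤ) ∣ A1 := by
        rw [← hcast]
        have h := congrArg (fun z : ℤ => (z : ZMod p)) eq8
        push_cast at h
        rw [hA2cast] at h
        have h' : (A1 : ZMod p) * (B2 : ZMod p) = 0 := by linear_combination -h
        exact (mul_eq_zero.mp h').resolve_right hB2cast
      have hA1cast : (A1 : ZMod p) = 0 := (hcast A1).mpr hA1
      have hA3cast : (A3 : ZMod p) = 0 := (hcast A3).mpr hA3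
      have hps : (p:ℤ) ∣ s := by
        rw [← hcast]
        have h := congrArg (fun z : ℤ => (z : ZMod p)) eq1
        push_cast at h
        rw [ZMod.natCast_self, hA0cast, hA2cast] at h
        have : (s : ZMod p)^2 = 0 := by linear_combination h
        exact pow_eq_zero_iff (n := 2) (by norm_num) |>.mp this
      exact hallA ⟨hA0, hA1, hA2, hA3, hps⟩


private lemma not_rat_square (p : ℕ) (hp : p.Prime) (e : ℤ) (hpe : ¬ ((p:ℤ) ∣ e)) :
    ¬ ∃ r : ℚ, r ^ 2 = (((p:ℤ) * e : ℤ) : ℚ) := by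
  rintro ⟨r, hr⟩
  have hprime : Prime ((p : ℤ)) := Nat.prime_iff_prime_int.mp hp
  have hden : r.den = 1 := by
    have h1 := congrArg Rat.den hr
    rw [Rat.den_pow, Rat.den_intCast] at h1
    nlinarith [r.pos]
  have hnum : r.num ^ 2 = (p:ℤ) * e := by
    have h1 := congrArg Rat.num hr
    rwa [Rat.num_pow, Rat.num_intCast] at h1
  have hdvd : (p:ℤ) ∣ r.num := hprime.dvd_of_dvd_pow (n := 2) ⟨e, hnum⟩
  obtain ⟨m, hm⟩ := hdvd
  apply hpe
  refine ⟨m ^ 2, ?_⟩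
  have hne : (p:ℤ) ≠ 0 := by exact_mod_cast hp.ne_zero
  apply mul_left_cancel₀ hne
  rw [← hnum, hm]; ring

private lemma not_dvd_starprod (p : ℕ) (hp : p.Prime) (M : Finset ℕ)
    (hM : ∀ q ∈ M, Nat.Prime q) (hne : ∀ q ∈ M, q ≠ p) :
    ¬ ((p:ℤ) ∣ ∏ q ∈ M, ((-1:ℤ) ^ ((q - 1) / 2) * (q:ℤ))) := by
  intro hdvd
  have hprime : Prime ((p : ℤ)) := Nat.prime_iff_prime_int.mp hp
  obtain ⟨q, hqM, hq⟩ := hprime.exists_mem_finset_dvd hdvd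
  rcases hprime.dvd_mul.mp hq with h | h
  · exact hprime.not_unit (isUnit_of_dvd_unit h ((isUnit_one.neg).pow _))
  · have hq' : p ∣ q := by exact_mod_cast h
    exact hne q hqM ((Nat.prime_dvd_prime_iff_eq hp (hM q hqM)).mp hq').symm


private lemma rat_scale (r : ℚ) (c : ℤ) (h : (r.den : ℤ) ∣ c) : ∃ A : ℤ, (A : ℚ) = r * c := by
  obtain ⟨k, hk⟩ := h
  refine ⟨r.num * k, ?_⟩
  have hden : ((r.den : ℚ)) ≠ 0 := by
    exact_mod_cast r.den_nz
  have hnum : (r.num : ℚ) = r * r.den := (Rat.mul_den_eq_num r).symm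
  push_cast [hk]
  rw [hnum]; ring

private lemma clear_denoms (a0 a1 a2 a3 : ℚ) :
    ∃ (A0 A1 A2 A3 s : ℤ), s ≠ 0 ∧ (A0 : ℚ) = a0 * s ∧ (A1 : ℚ) = a1 * s ∧
      (A2 : ℚ) = a2 * s ∧ (A3 : ℚ) = a3 * s := by
  set s : ℤ := (a0.den * a1.den * a2.den * a3.den : ℤ) with hs
  have hs0 : s ≠ 0 := by
    simp only [hs]
    positivity
  obtain ⟨A0, h0⟩ := rat_scale a0 s ⟨(a1.den * a2.den * a3.den : ℤ), by push_cast [hs]; ring⟩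
  obtain ⟨A1, h1⟩ := rat_scale a1 s ⟨(a0.den * a2.den * a3.den : ℤ), by push_cast [hs]; ring⟩
  obtain ⟨A2, h2⟩ := rat_scale a2 s ⟨(a0.den * a1.den * a3.den : ℤ), by push_cast [hs]; ring⟩
  obtain ⟨A3, h3⟩ := rat_scale a3 s ⟨(a0.den * a1.den * a2.den : ℤ), by push_cast [hs]; ring⟩
  exact ⟨A0, A1, A2, A3, s, hs0, h0, h1, h2, h3⟩

private lemma key_rat (p : ℕ) [Fact p.Prime] (d1 e d2 : ℤ) (hd1 : d1 = (p:ℤ) * e)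
    (hpe : ¬ ((p:ℤ) ∣ e)) (hpd2 : ¬ ((p:ℤ) ∣ d2)) (hns : ¬ IsSquare ((-d2 : ℤ) : ZMod p))
    (a0 a1 a2 a3 b0 b1 b2 b3 : ℚ)
    (e1 : a0^2 + (d1:ℚ)*a1^2 - (d2:ℚ)*a2^2 - (d1:ℚ)*(d2:ℚ)*a3^2 = -1)
    (e3 : b0^2 - (d1:ℚ)*b1^2 + (d2:ℚ)*b2^2 - (d1:ℚ)*(d2:ℚ)*b3^2 = -1)
    (e5 : a0*b0 = (d1:ℚ)*(d2:ℚ)*a3*b3) (e6 : a0*b1 = (d2:ℚ)*a3*b2)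
    (e7 : a2*b0 = (d1:ℚ)*a1*b3) (e8 : a2*b1 = a1*b2) : False := by
  obtain ⟨A0, A1, A2, A3, s, hs0, h0, h1, h2, h3⟩ := clear_denoms a0 a1 a2 a3
  obtain ⟨B0, B1, B2, B3, t, ht0, g0, g1, g2, g3⟩ := clear_denoms b0 b1 b2 b3
  have hd1q : (d1 : ℚ) = (p : ℚ) * (e : ℚ) := by rw [hd1]; push_cast; ring
  refine key_int p e d2 hpe hpd2 hns (s.natAbs + t.natAbs) A0 A1 A2 A3 s B0 B1 B2 B3 t
    le_rfl hs0 ht0 ?_ ?_ ?_ ?_ ?_ ?_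
  · have : (A0:ℚ)^2 + ((p:ℚ)*(e:ℚ))*(A1:ℚ)^2 - (d2:ℚ)*(A2:ℚ)^2
        - ((p:ℚ)*(e:ℚ))*(d2:ℚ)*(A3:ℚ)^2 = -(s:ℚ)^2 := by
      rw [h0, h1, h2, h3, ← hd1q]
      linear_combination (s:ℚ)^2 * e1
    exact_mod_cast this
  · have : (B0:ℚ)^2 - ((p:ℚ)*(e:ℚ))*(B1:ℚ)^2 + (d2:ℚ)*(B2:ℚ)^2
        - ((p:ℚ)*(e:ℚ))*(d2:ℚ)*(B3:ℚ)^2 = -(t:ℚ)^2 := by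
      rw [g0, g1, g2, g3, ← hd1q]
      linear_combination (t:ℚ)^2 * e3
    exact_mod_cast this
  · have : (A0:ℚ)*(B0:ℚ) = ((p:ℚ)*(e:ℚ))*(d2:ℚ)*(A3:ℚ)*(B3:ℚ) := by
      rw [h0, h3, g0, g3, ← hd1q]
      linear_combination (s:ℚ)*(t:ℚ) * e5
    exact_mod_cast this
  · have : (A0:ℚ)*(B1:ℚ) = (d2:ℚ)*(A3:ℚ)*(B2:ℚ) := by
      rw [h0, h3, g1, g2]
      linear_combination (s:ℚ)*(t:ℚ) * e6
    exact_mod_cast this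
  · have : (A2:ℚ)*(B0:ℚ) = ((p:ℚ)*(e:ℚ))*(A1:ℚ)*(B3:ℚ) := by
      rw [h2, h1, g0, g3, ← hd1q]
      linear_combination (s:ℚ)*(t:ℚ) * e7
    exact_mod_cast this
  · have : (A2:ℚ)*(B1:ℚ) = (A1:ℚ)*(B2:ℚ) := by
      rw [h2, h1, g1, g2]
      linear_combination (s:ℚ)*(t:ℚ) * e8
    exact_mod_cast this


open IntermediateField in
private lemma galois_system
    (d1 d2 : ℤ) (hd1 : d1 ≠ 0) (hd2 : d2 ≠ 0)
    (h1sq : ¬ ∃ r : ℚ, r ^ 2 = (d1 : ℚ)) (h2sq : ¬ ∃ r : ℚ, r ^ 2 = (d2 : ℚ))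
    (h12sq : ¬ ∃ r : ℚ, r ^ 2 = ((d1 * d2 : ℤ) : ℚ))
    (L : Type) [Field L] [NumberField L] [IsGalois ℚ L]
    (φ : (L ≃ₐ[ℚ] L) ≃* QuaternionGroup 2)
    (x y : L) (hx : x ^ 2 = (d1 : L)) (hy : y ^ 2 = (d2 : L)) :
    ∃ a0 a1 a2 a3 b0 b1 b2 b3 : ℚ,
      a0^2 + (d1:ℚ)*a1^2 - (d2:ℚ)*a2^2 - (d1:ℚ)*(d2:ℚ)*a3^2 = -1 ∧
      b0^2 - (d1:ℚ)*b1^2 + (d2:ℚ)*b2^2 - (d1:ℚ)*(d2:ℚ)*b3^2 = -1 ∧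
      a0*b0 = (d1:ℚ)*(d2:ℚ)*a3*b3 ∧ a0*b1 = (d2:ℚ)*a3*b2 ∧
      a2*b0 = (d1:ℚ)*a1*b3 ∧ a2*b1 = a1*b2 := by
  classical
  have hx0 : x ≠ 0 := by
    intro h
    rw [h] at hx
    exact (Int.cast_ne_zero (α := L)).mpr hd1 (by rw [← hx]; ring)
  have hy0 : y ≠ 0 := by
    intro h
    rw [h] at hy
    exact (Int.cast_ne_zero (α := L)).mpr hd2 (by rw [← hy]; ring)
  have h2L : (2 : L) ≠ 0 := two_ne_zero
  have hxne : x ≠ -x := by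
    intro h
    apply hx0
    have h2 : (2 : L) * x = 0 := by linear_combination h
    rcases mul_eq_zero.mp h2 with h' | h'
    · exact absurd h' h2L
    · exact h'
  have hyne : y ≠ -y := by
    intro h
    apply hy0
    have h2 : (2 : L) * y = 0 := by linear_combination h
    rcases mul_eq_zero.mp h2 with h' | h'
    · exact absurd h' h2L
    · exact h'
  -- sign dichotomy
  have hsignx : ∀ σ : L ≃ₐ[ℚ] L, σ x = x ∨ σ x = -x := by
    intro σ
    have h : σ x * σ x = x * x := by
      have h1 := congrArg σ hx
      rw [map_pow, map_intCast] at h1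
      rw [← hx] at h1
      linear_combination h1
    exact mul_self_eq_mul_self_iff.mp h
  have hsigny : ∀ σ : L ≃ₐ[ℚ] L, σ y = y ∨ σ y = -y := by
    intro σ
    have h : σ y * σ y = y * y := by
      have h1 := congrArg σ hy
      rw [map_pow, map_intCast] at h1
      rw [← hy] at h1
      linear_combination h1
    exact mul_self_eq_mul_self_iff.mp h
  -- fixed by all automorphisms means rational
  have hfix : ∀ t : L, (∀ σ : L ≃ₐ[ℚ] L, σ t = t) → ∃ r : ℚ, (r : L) = t := by
    intro t ht
    have hbot : IntermediateField.fixedField (⊤ : Subgroup (L ≃ₐ[ℚ] L)) = ⊥ :=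
      OrderIso.map_bot (@IsGalois.intermediateFieldEquivSubgroup ℚ _ L _ _ _ _).symm
    have htop : t ∈ IntermediateField.fixedField (⊤ : Subgroup (L ≃ₐ[ℚ] L)) := by
      exact fun g => ht g
    rw [hbot, IntermediateField.mem_bot] at htop
    obtain ⟨r, hr⟩ := htop
    exact ⟨r, by rw [← hr]; simpa using (map_ratCast (algebraMap ℚ L) r)⟩
  -- existence of automorphisms moving x, y, x*y
  have hEx : ∃ σ : L ≃ₐ[ℚ] L, σ x = -x := by
    by_contra h
    push_neg at h
    have h' : ∀ σ : L ≃ₐ[ℚ] L, σ x = x := fun σ => (hsignx σ).resolve_right (h σ)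
    obtain ⟨r, hr⟩ := hfix x h'
    refine h1sq ⟨r, ?_⟩
    have : ((r : ℚ) : L) ^ 2 = ((d1 : ℚ) : L) := by rw [hr]; push_cast; exact hx
    exact_mod_cast this
  have hEy : ∃ σ : L ≃ₐ[ℚ] L, σ y = -y := by
    by_contra h
    push_neg at h
    have h' : ∀ σ : L ≃ₐ[ℚ] L, σ y = y := fun σ => (hsigny σ).resolve_right (h σ)
    obtain ⟨r, hr⟩ := hfix y h'
    refine h2sq ⟨r, ?_⟩
    have : ((r : ℚ) : L) ^ 2 = ((d2 : ℚ) : L) := by rw [hr]; push_cast; exact hy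
    exact_mod_cast this
  have hExy : ∃ σ : L ≃ₐ[ℚ] L, σ x ≠ x ∨ σ y ≠ y := by
    by_contra h
    push_neg at h
    have h' : ∀ σ : L ≃ₐ[ℚ] L, σ (x * y) = x * y := by
      intro σ; rw [map_mul, (h σ).1, (h σ).2]
    obtain ⟨r, hr⟩ := hfix (x * y) h'
    refine h12sq ⟨r, ?_⟩
    have : ((r : ℚ) : L) ^ 2 = (((d1 * d2 : ℤ) : ℚ) : L) := by
      rw [hr]; push_cast; rw [mul_pow, hx, hy]
    exact_mod_cast this
  -- there is an automorphism with a mixed sign pattern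
  have hMixed : ∃ w : L ≃ₐ[ℚ] L, (w x = x ∧ w y = -y) ∨ (w x = -x ∧ w y = y) := by
    by_contra h
    push_neg at h
    have hall : ∀ σ : L ≃ₐ[ℚ] L, σ (x * y) = x * y := by
      intro σ
      rcases hsignx σ with h1 | h1 <;> rcases hsigny σ with h2 | h2
      · rw [map_mul, h1, h2]
      · exact absurd h2 ((h σ).1 h1)
      · exact absurd h2 ((h σ).2 h1)
      · rw [map_mul, h1, h2]; ring
    obtain ⟨r, hr⟩ := hfix (x * y) hall
    refine h12sq ⟨r, ?_⟩
    have : ((r : ℚ) : L) ^ 2 = (((d1 * d2 : ℤ) : ℚ) : L) := by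
      rw [hr]; push_cast; rw [mul_pow, hx, hy]
    exact_mod_cast this
  -- construct i and j with patterns (+,-) and (-,+)
  obtain ⟨i, j, hix, hiy, hjx, hjy⟩ :
      ∃ i j : L ≃ₐ[ℚ] L, i x = x ∧ i y = -y ∧ j x = -x ∧ j y = y := by
    obtain ⟨w, hw | hw⟩ := hMixed
    · -- w = (+,-) : i := w
      obtain ⟨u, hu⟩ := hEx
      rcases hsigny u with huy | huy
      · exact ⟨w, u, hw.1, hw.2, hu, huy⟩
      · refine ⟨w, w * u, hw.1, hw.2, ?_, ?_⟩
        · rw [AlgEquiv.mul_apply, hu, map_neg, hw.1]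
        · rw [AlgEquiv.mul_apply, huy, map_neg, hw.2]; ring
    · -- w = (-,+) : j := w
      obtain ⟨v, hv⟩ := hEy
      rcases hsignx v with hvx | hvx
      · exact ⟨v, w, hvx, hv, hw.1, hw.2⟩
      · refine ⟨w * v, w, ?_, ?_, hw.1, hw.2⟩
        · rw [AlgEquiv.mul_apply, hvx, map_neg, hw.1]; ring
        · rw [AlgEquiv.mul_apply, hv, map_neg, hw.2]
  -- quaternion group structure
  set z : L ≃ₐ[ℚ] L := φ.symm (QuaternionGroup.a 2) with hzdef
  have hφz : φ z = QuaternionGroup.a 2 := φ.apply_symm_apply _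
  have hz2 : z * z = 1 := by
    apply φ.injective
    rw [map_mul, hφz, map_one]
    decide
  have hz1 : z ≠ 1 := by
    intro h
    have h2 := hφz
    rw [h, map_one] at h2
    exact (by decide : (1 : QuaternionGroup 2) ≠ QuaternionGroup.a 2) h2
  have hzxy : z x = x ∧ z y = y := by
    have hgg : φ.symm (QuaternionGroup.a 1) * φ.symm (QuaternionGroup.a 1) = z := by
      apply φ.injective
      rw [map_mul, φ.apply_symm_apply, hφz]
      decide
    set g := φ.symm (QuaternionGroup.a 1)
    constructor
    · rw [← hgg, AlgEquiv.mul_apply]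
      rcases hsignx g with h | h
      · rw [h, h]
      · rw [h, map_neg, h]; ring
    · rw [← hgg, AlgEquiv.mul_apply]
      rcases hsigny g with h | h
      · rw [h, h]
      · rw [h, map_neg, h]; ring
  have hzsq : ∀ g : L ≃ₐ[ℚ] L, g ≠ 1 → g ≠ z → g * g = z := by
    intro g hg1 hgz
    apply φ.injective
    rw [map_mul, hφz]
    have h1 : φ g ≠ 1 := fun h => hg1 (by apply φ.injective; rw [h, map_one])
    have h2 : φ g ≠ QuaternionGroup.a 2 := fun h => hgz (by apply φ.injective; rw [h, hφz])
    exact (by decide : ∀ q : QuaternionGroup 2, q ≠ 1 → q ≠ QuaternionGroup.a 2 →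
      q * q = QuaternionGroup.a 2) (φ g) h1 h2
  have hi1 : i ≠ 1 := by
    intro h
    rw [h] at hiy
    exact hyne ((AlgEquiv.one_apply y).symm.trans hiy)
  have hiz : i ≠ z := by
    intro h
    rw [h, hzxy.2] at hiy
    exact hyne hiy
  have hj1 : j ≠ 1 := by
    intro h
    rw [h] at hjx
    exact hxne ((AlgEquiv.one_apply x).symm.trans hjx)
  have hjz : j ≠ z := by
    intro h
    rw [h, hzxy.1] at hjx
    exact hxne hjx
  have hii : i * i = z := hzsq i hi1 hiz
  have hjj : j * j = z := hzsq j hj1 hjz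
  have hk1 : i * j ≠ 1 := by
    intro h
    have : (i * j) x = x := by rw [h, AlgEquiv.one_apply]
    rw [AlgEquiv.mul_apply, hjx, map_neg, hix] at this
    exact hxne this.symm
  have hkz : i * j ≠ z := by
    intro h
    have : (i * j) x = x := by rw [h, hzxy.1]
    rw [AlgEquiv.mul_apply, hjx, map_neg, hix] at this
    exact hxne this.symm
  have hkk : (i * j) * (i * j) = z := hzsq (i * j) hk1 hkz
  have hji : j * i = i * j * z := by
    apply φ.injective
    rw [map_mul, map_mul, map_mul, hφz]
    exact (by decide : ∀ I J : QuaternionGroup 2, I * I = QuaternionGroup.a 2 →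
        J * J = QuaternionGroup.a 2 → (I * J) * (I * J) = QuaternionGroup.a 2 →
        J * I = I * J * QuaternionGroup.a 2) (φ i) (φ j)
      (by rw [← map_mul, hii, hφz]) (by rw [← map_mul, hjj, hφz])
      (by rw [← map_mul, ← map_mul, hkk, hφz])
  have hcommz : ∀ g : L ≃ₐ[ℚ] L, g * z = z * g := by
    intro g
    apply φ.injective
    rw [map_mul, map_mul, hφz]
    exact (by decide : ∀ q : QuaternionGroup 2,
      q * QuaternionGroup.a 2 = QuaternionGroup.a 2 * q) (φ g)
  -- the element w and the cocycle values A, B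
  obtain ⟨θ, hθ⟩ : ∃ θ : L, z θ ≠ θ := by
    by_contra h
    push_neg at h
    exact hz1 (AlgEquiv.ext fun a => (h a).trans (AlgEquiv.one_apply a).symm)
  set w : L := θ - z θ with hwdef
  have hw0 : w ≠ 0 := sub_ne_zero.mpr (Ne.symm hθ)
  have hzw : z w = -w := by
    have h1 : z (z θ) = θ := by rw [← AlgEquiv.mul_apply, hz2, AlgEquiv.one_apply]
    rw [hwdef, map_sub, h1]
    ring
  have hiw0 : i w ≠ 0 := fun h => hw0 (i.injective (h.trans (map_zero i).symm))
  have hjw0 : j w ≠ 0 := fun h => hw0 (j.injective (h.trans (map_zero j).symm))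
  set A : L := i w / w with hAdef
  set B : L := j w / w with hBdef
  have hiA : i A * A = -1 := by
    have h1 : i A = z w / i w := by rw [hAdef, map_div₀, ← AlgEquiv.mul_apply, hii]
    rw [h1, hzw, hAdef]
    field_simp
  have hjB : j B * B = -1 := by
    have h1 : j B = z w / j w := by rw [hBdef, map_div₀, ← AlgEquiv.mul_apply, hjj]
    rw [h1, hzw, hBdef]
    field_simp
  have hzA : z A = A := by
    have h1 : z (i w) = -(i w) := by
      rw [← AlgEquiv.mul_apply, ← hcommz i, AlgEquiv.mul_apply, hzw, map_neg]
    rw [hAdef, map_div₀, h1, hzw, neg_div_neg_eq]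
  have hzB : z B = B := by
    have h1 : z (j w) = -(j w) := by
      rw [← AlgEquiv.mul_apply, ← hcommz j, AlgEquiv.mul_apply, hzw, map_neg]
    rw [hBdef, map_div₀, h1, hzw, neg_div_neg_eq]
  have hcomp : j A * B = -(i B * A) := by
    have h1 : j A = ((j * i) w) / (j w) := by rw [hAdef, map_div₀, ← AlgEquiv.mul_apply]
    have h2 : i B = ((i * j) w) / (i w) := by rw [hBdef, map_div₀, ← AlgEquiv.mul_apply]
    have h3 : (j * i) w = -((i * j) w) := by
      rw [hji, AlgEquiv.mul_apply (i * j) z, hzw, map_neg]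
    rw [h1, h2, h3, hAdef, hBdef]
    field_simp
  -- the fixed field of z and its basis 1, x, y, xy
  have indep4 : ∀ r0 r1 r2 r3 : ℚ,
      (r0 : L) + (r1 : L) * x + (r2 : L) * y + (r3 : L) * (x * y) = 0 →
      r0 = 0 ∧ r1 = 0 ∧ r2 = 0 ∧ r3 = 0 := by
    intro r0 r1 r2 r3 hE
    have hEi : (r0 : L) + (r1 : L) * x - (r2 : L) * y - (r3 : L) * (x * y) = 0 := by
      have h := congrArg i hE
      simp only [map_add, map_mul, map_zero, map_ratCast, hix, hiy] at h
      linear_combination h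
    have hF : (r0 : L) + (r1 : L) * x = 0 := by
      linear_combination ((1 : L) / 2) * hE + ((1 : L) / 2) * hEi
    have hG : (r2 : L) + (r3 : L) * x = 0 := by
      have hG0 : ((r2 : L) + (r3 : L) * x) * y = 0 := by
        linear_combination ((1 : L) / 2) * hE - ((1 : L) / 2) * hEi
      exact (mul_eq_zero.mp hG0).resolve_right hy0
    have hFj : (r0 : L) - (r1 : L) * x = 0 := by
      have h := congrArg j hF
      simp only [map_add, map_mul, map_zero, map_ratCast, hjx] at h
      linear_combination h
    have hGj : (r2 : L) - (r3 : L) * x = 0 := by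
      have h := congrArg j hG
      simp only [map_add, map_mul, map_zero, map_ratCast, hjx] at h
      linear_combination h
    have h0 : (r0 : L) = 0 := by linear_combination ((1 : L) / 2) * hF + ((1 : L) / 2) * hFj
    have h1 : (r1 : L) = 0 := by
      have h1x : (r1 : L) * x = 0 := by
        linear_combination ((1 : L) / 2) * hF - ((1 : L) / 2) * hFj
      exact (mul_eq_zero.mp h1x).resolve_right hx0
    have h2 : (r2 : L) = 0 := by linear_combination ((1 : L) / 2) * hG + ((1 : L) / 2) * hGj
    have h3 : (r3 : L) = 0 := by
      have h3x : (r3 : L) * x = 0 := by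
        linear_combination ((1 : L) / 2) * hG - ((1 : L) / 2) * hGj
      exact (mul_eq_zero.mp h3x).resolve_right hx0
    exact ⟨by exact_mod_cast h0, by exact_mod_cast h1, by exact_mod_cast h2, by exact_mod_cast h3⟩
  -- dimension count
  have hcardG : Fintype.card (L ≃ₐ[ℚ] L) = 8 := by
    rw [Fintype.card_congr φ.toEquiv]
    decide
  have hfinL : Module.finrank ℚ L = 8 := by rw [← IsGalois.card_aut_eq_finrank, Nat.card_eq_fintype_card]; exact hcardG
  have horder : orderOf z = 2 := by
    refine orderOf_eq_prime ?_ hz1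
    rw [pow_two]; exact hz2
  have hcardH : Fintype.card (Subgroup.zpowers z) = 2 := by
    rw [Fintype.card_zpowers, horder]
  set K : IntermediateField ℚ L := IntermediateField.fixedField (Subgroup.zpowers z) with hKdef
  have hmemK : ∀ t : L, z t = t → t ∈ K := by
    intro t ht
    have hst : Subgroup.zpowers z ≤ MulAction.stabilizer (L ≃ₐ[ℚ] L) t :=
      Subgroup.zpowers_le.mpr (by exact ht)
    exact fun g => hst g.2
  have hKL : Module.finrank K L = 2 := by
    rw [hKdef, IntermediateField.finrank_fixedField_eq_card, Nat.card_zpowers, horder]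
  have hQK : Module.finrank ℚ K = 4 := by
    have hmul := Module.finrank_mul_finrank ℚ K L
    rw [hKL, hfinL] at hmul
    omega
  -- spanning
  set v : Fin 4 → L := ![1, x, y, x * y] with hvdef
  have hli : LinearIndependent ℚ v := by
    rw [Fintype.linearIndependent_iff]
    intro g hg
    have hsum : (g 0 : L) + (g 1 : L) * x + (g 2 : L) * y + (g 3 : L) * (x * y) = 0 := by
      rw [Fin.sum_univ_four] at hg
      simp only [hvdef, Matrix.cons_val_zero, Matrix.cons_val_one, Matrix.head_cons,
        Matrix.cons_val_two, Matrix.tail_cons, Matrix.cons_val_three, Rat.smul_def,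
        mul_one] at hg
      linear_combination hg
    obtain ⟨h0, h1, h2, h3⟩ := indep4 _ _ _ _ hsum
    intro idx
    fin_cases idx <;> assumption
  have hspan : ∀ t : L, t ∈ K → t ∈ Submodule.span ℚ (Set.range v) := by
    intro t ht
    have hle : Submodule.span ℚ (Set.range v) ≤ Subalgebra.toSubmodule K.toSubalgebra := by
      rw [Submodule.span_le]
      rintro _ ⟨idx, rfl⟩
      simp only [Set.mem_setOf_eq, SetLike.mem_coe, Subalgebra.mem_toSubmodule,
        IntermediateField.mem_toSubalgebra]
      fin_cases idx
      · exact one_mem K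
      · exact hmemK x hzxy.1
      · exact hmemK y hzxy.2
      · exact mul_mem (hmemK x hzxy.1) (hmemK y hzxy.2)
    have heq : Submodule.span ℚ (Set.range v) = Subalgebra.toSubmodule K.toSubalgebra := by
      apply Submodule.eq_of_le_of_finrank_le hle
      rw [finrank_span_eq_card hli]
      have : Module.finrank ℚ (Subalgebra.toSubmodule K.toSubalgebra) = 4 := hQK
      rw [this]
      norm_num
    rw [heq]
    exact ht
  have hcoords : ∀ t : L, t ∈ K → ∃ c : Fin 4 → ℚ,
      t = (c 0 : L) + (c 1 : L) * x + (c 2 : L) * y + (c 3 : L) * (x * y) := by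
    intro t ht
    obtain ⟨c, hc⟩ := (Submodule.mem_span_range_iff_exists_fun ℚ).mp (hspan t ht)
    refine ⟨c, ?_⟩
    rw [← hc, Fin.sum_univ_four]
    simp only [hvdef, Matrix.cons_val_zero, Matrix.cons_val_one, Matrix.head_cons,
      Matrix.cons_val_two, Matrix.tail_cons, Matrix.cons_val_three, Rat.smul_def, mul_one]
  obtain ⟨a, hA4⟩ := hcoords A (hmemK A hzA)
  obtain ⟨b, hB4⟩ := hcoords B (hmemK B hzB)
  set a0 := a 0; set a1 := a 1; set a2 := a 2; set a3 := a 3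
  set b0 := b 0; set b1 := b 1; set b2 := b 2; set b3 := b 3
  -- the image of A under i, and of A, B under j etc.
  have hiA4 : i A = (a0 : L) + (a1 : L) * x - (a2 : L) * y - (a3 : L) * (x * y) := by
    rw [hA4]
    simp only [map_add, map_mul, map_ratCast, hix, hiy]
    ring
  have hjA4 : j A = (a0 : L) - (a1 : L) * x + (a2 : L) * y - (a3 : L) * (x * y) := by
    rw [hA4]
    simp only [map_add, map_mul, map_ratCast, hjx, hjy]
    ring
  have hiB4 : i B = (b0 : L) + (b1 : L) * x - (b2 : L) * y - (b3 : L) * (x * y) := by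
    rw [hB4]
    simp only [map_add, map_mul, map_ratCast, hix, hiy]
    ring
  have hjB4 : j B = (b0 : L) - (b1 : L) * x + (b2 : L) * y - (b3 : L) * (x * y) := by
    rw [hB4]
    simp only [map_add, map_mul, map_ratCast, hjx, hjy]
    ring
  -- extract the rational equations
  refine ⟨a0, a1, a2, a3, b0, b1, b2, b3, ?_, ?_, ?_, ?_, ?_, ?_⟩
  · -- eq1 from i A * A = -1
    have hE : ((a0^2 + (d1:ℚ)*a1^2 - (d2:ℚ)*a2^2 - (d1:ℚ)*(d2:ℚ)*a3^2 + 1 : ℚ) : L)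
        + ((2*a0*a1 - 2*(d2:ℚ)*a2*a3 : ℚ) : L) * x + ((0:ℚ) : L) * y
        + ((0:ℚ) : L) * (x * y) = 0 := by
      have h := hiA
      rw [hiA4, hA4] at h
      push_cast
      linear_combination h - ((a1:L)^2 - (a3:L)^2 * y^2) * hx
        - (-(a3:L)^2*((d1:ℤ):L) - (2:L)*(a2:L)*(a3:L)*x - (a2:L)^2) * hy
    obtain ⟨h0, _, _, _⟩ := indep4 _ _ _ _ hE
    linarith
  · -- eq3 from j B * B = -1
    have hE : ((b0^2 - (d1:ℚ)*b1^2 + (d2:ℚ)*b2^2 - (d1:ℚ)*(d2:ℚ)*b3^2 + 1 : ℚ) : L)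
        + ((0:ℚ) : L) * x + ((2*b0*b2 - 2*(d1:ℚ)*b1*b3 : ℚ) : L) * y
        + ((0:ℚ) : L) * (x * y) = 0 := by
      have h := hjB
      rw [hjB4, hB4] at h
      push_cast
      linear_combination h - (-(b3:L)^2*y^2 - (2:L)*(b1:L)*(b3:L)*y - (b1:L)^2) * hx
        - (-(b3:L)^2*((d1:ℤ):L) + (b2:L)^2) * hy
    obtain ⟨h0, _, _, _⟩ := indep4 _ _ _ _ hE
    linarith
  all_goals {
    -- eq5-eq8 from j A * B + i B * A = 0
    have hE : ((2*a0*b0 - 2*(d1:ℚ)*(d2:ℚ)*a3*b3 : ℚ) : L)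
        + ((2*a0*b1 - 2*(d2:ℚ)*a3*b2 : ℚ) : L) * x
        + ((2*a2*b0 - 2*(d1:ℚ)*a1*b3 : ℚ) : L) * y
        + ((2*a2*b1 - 2*a1*b2 : ℚ) : L) * (x * y) = 0 := by
      have h : j A * B + i B * A = 0 := by rw [hcomp]; ring
      rw [hjA4, hiB4, hA4, hB4] at h
      push_cast
      linear_combination h - (-(2:L)*(a3:L)*(b3:L)*y^2 - (2:L)*(a1:L)*(b3:L)*y) * hx
        - (-(2:L)*(a3:L)*(b3:L)*((d1:ℤ):L) - (2:L)*(a3:L)*(b2:L)*x) * hy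
    obtain ⟨h5, h6, h7, h8⟩ := indep4 _ _ _ _ hE
    linarith }


/-- Let `S`, `T` be disjoint finite sets of odd primes, and with
`p* = (−1)^((p−1)/2)·p` let `d₁ = ∏_{p∈S} p*` and `d₂ = ∏_{q∈T} q*`, both positive.
If `Δ(d₁,d₂) = ∏_{p∈S} ∏_{q∈T} (q/p) = −1`, then there is no number field `L`, Galois
over `ℚ` with Galois group isomorphic to the quaternion group `Q₈` of order 8 and odd
discriminant, containing square roots of `d₁` and of `d₂`
(equivalently, with `ℚ(√d₁,√d₂) ⊆ L`). -/
theorem no_quaternion_field_of_Delta_neg_one (S T : Finset ℕ)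
    (hS : ∀ p ∈ S, Nat.Prime p ∧ Odd p) (hT : ∀ q ∈ T, Nat.Prime q ∧ Odd q)
    (hST : Disjoint S T)
    (d1 d2 : ℤ)
    (hd1 : d1 = ∏ p ∈ S, ((-1 : ℤ) ^ ((p - 1) / 2) * (p : ℤ)))
    (hd2 : d2 = ∏ q ∈ T, ((-1 : ℤ) ^ ((q - 1) / 2) * (q : ℤ)))
    (hd1pos : 0 < d1) (hd2pos : 0 < d2)
    (hDelta : ∏ p ∈ S, ∏ q ∈ T, jacobiSym (q : ℤ) p = -1) :
    ∀ (L : Type) [Field L] [NumberField L] [IsGalois ℚ L],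
      Nonempty ((L ≃ₐ[ℚ] L) ≃* QuaternionGroup 2) →
      Odd (NumberField.discr L) →
      ¬ ((∃ x : L, x ^ 2 = (d1 : L)) ∧ (∃ y : L, y ^ 2 = (d2 : L))) := by
  classical
  -- T is nonempty
  have hT0 : T.Nonempty := by
    rcases Finset.eq_empty_or_nonempty T with h | h
    · exfalso
      rw [h] at hDelta
      simp at hDelta
    · exact h
  -- the sign product over S is 1
  have hppos : (0:ℤ) < ∏ p ∈ S, (p:ℤ) :=
    Finset.prod_pos (fun p hp => by exact_mod_cast (hS p hp).1.pos)
  have hsigma : ∏ p ∈ S, ((-1:ℤ) ^ ((p - 1) / 2)) = 1 := by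
    have hsd : d1 = (∏ p ∈ S, ((-1:ℤ) ^ ((p - 1) / 2))) * ∏ p ∈ S, (p:ℤ) := by
      rw [hd1, ← Finset.prod_mul_distrib]
    have hcases : (∏ p ∈ S, ((-1:ℤ) ^ ((p - 1) / 2))) = 1 ∨
        (∏ p ∈ S, ((-1:ℤ) ^ ((p - 1) / 2))) = -1 := by
      refine Finset.prod_induction _ (fun z => z = 1 ∨ z = -1) ?_ (Or.inl rfl) ?_
      · rintro u v (rfl | rfl) (rfl | rfl) <;> norm_num
      · intro p _
        rcases Nat.even_or_odd ((p - 1) / 2) with h | h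
        · exact Or.inl (Even.neg_one_pow h)
        · exact Or.inr (Odd.neg_one_pow h)
    rcases hcases with h | h
    · exact h
    · exfalso
      rw [h] at hsd
      nlinarith
  -- per-prime value of J(-1|p)
  have hjneg : ∀ p ∈ S, jacobiSym (-1) p = (-1:ℤ) ^ ((p - 1) / 2) := by
    intro p hp
    obtain ⟨hp1, hp2⟩ := hS p hp
    rw [jacobiSym.at_neg_one hp2, ZMod.χ₄_eq_neg_one_pow (Nat.odd_iff.mp hp2)]
    have hodd := Nat.odd_iff.mp hp2
    congr 1
    omega
  have hsigmaJ : ∏ p ∈ S, jacobiSym (-1) p = 1 := by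
    rw [Finset.prod_congr rfl hjneg]; exact hsigma
  -- product of J(d2 | p) over S equals -1
  set E : ℕ := ∑ q ∈ T, (q - 1) / 2 with hE
  have hstep : ∀ p ∈ S, jacobiSym d2 p
      = (jacobiSym (-1) p) ^ E * ∏ q ∈ T, jacobiSym (q:ℤ) p := by
    intro p _
    calc jacobiSym d2 p
        = ∏ q ∈ T, jacobiSym ((-1:ℤ) ^ ((q - 1) / 2) * (q:ℤ)) p := by
          rw [hd2]
          exact map_prod (⟨⟨fun a => jacobiSym a p, jacobiSym.one_left p⟩,
            fun a b => jacobiSym.mul_left a b p⟩ : ℤ →* ℤ) _ T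
      _ = ∏ q ∈ T, ((jacobiSym (-1) p) ^ ((q - 1) / 2) * jacobiSym (q:ℤ) p) := by
          refine Finset.prod_congr rfl fun q _ => ?_
          rw [jacobiSym.mul_left, jacobiSym.pow_left]
      _ = (∏ q ∈ T, (jacobiSym (-1) p) ^ ((q - 1) / 2)) * ∏ q ∈ T, jacobiSym (q:ℤ) p :=
          Finset.prod_mul_distrib
      _ = (jacobiSym (-1) p) ^ E * ∏ q ∈ T, jacobiSym (q:ℤ) p := by
          rw [Finset.prod_pow_eq_pow_sum]
  have hProdd2 : ∏ p ∈ S, jacobiSym d2 p = -1 := by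
    calc ∏ p ∈ S, jacobiSym d2 p
        = ∏ p ∈ S, ((jacobiSym (-1) p) ^ E * ∏ q ∈ T, jacobiSym (q:ℤ) p) :=
          Finset.prod_congr rfl hstep
      _ = (∏ p ∈ S, (jacobiSym (-1) p) ^ E) * ∏ p ∈ S, ∏ q ∈ T, jacobiSym (q:ℤ) p :=
          Finset.prod_mul_distrib
      _ = ((∏ p ∈ S, jacobiSym (-1) p) ^ E) * (-1) := by rw [Finset.prod_pow, hDelta]
      _ = -1 := by rw [hsigmaJ, one_pow, one_mul]
  have hProdNeg : ∏ p ∈ S, jacobiSym (-d2) p = -1 := by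
    calc ∏ p ∈ S, jacobiSym (-d2) p
        = ∏ p ∈ S, (jacobiSym (-1) p * jacobiSym d2 p) := by
          refine Finset.prod_congr rfl fun p _ => ?_
          rw [show (-d2) = (-1) * d2 by ring, jacobiSym.mul_left]
      _ = (∏ p ∈ S, jacobiSym (-1) p) * ∏ p ∈ S, jacobiSym d2 p := Finset.prod_mul_distrib
      _ = -1 := by rw [hsigmaJ, hProdd2, one_mul]
  -- divisibility of d2 by primes of S fails
  have hpd2all : ∀ p ∈ S, ¬ ((p:ℤ) ∣ d2) := by
    intro p hp
    rw [hd2]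
    refine not_dvd_starprod p (hS p hp).1 T (fun q hq => (hT q hq).1) ?_
    intro q hq hqp
    exact Finset.disjoint_left.mp hST hp (hqp ▸ hq)
  -- existence of a bad prime p ∈ S
  have hex : ∃ p ∈ S, jacobiSym (-d2) p = -1 := by
    by_contra hcon
    push_neg at hcon
    have hall : ∀ p ∈ S, jacobiSym (-d2) p = 1 := by
      intro p hp
      haveI : Fact p.Prime := ⟨(hS p hp).1⟩
      have hzmod : ((-d2 : ℤ) : ZMod p) ≠ 0 := by
        rw [Ne, ZMod.intCast_zmod_eq_zero_iff_dvd]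
        intro h
        exact hpd2all p hp (dvd_neg.mp h)
      have htri := legendreSym.eq_one_or_neg_one p hzmod
      rw [jacobiSym.legendreSym.to_jacobiSym] at htri
      exact htri.resolve_right (hcon p hp)
    rw [Finset.prod_congr rfl hall] at hProdNeg
    simp at hProdNeg
  obtain ⟨p, hpS, hpbad⟩ := hex
  have hp1 : p.Prime := (hS p hpS).1
  haveI : Fact p.Prime := ⟨hp1⟩
  have hprimeZ : Prime ((p:ℤ)) := Nat.prime_iff_prime_int.mp hp1
  -- write d1 = p * e
  set e : ℤ := (-1:ℤ) ^ ((p - 1) / 2) * ∏ p' ∈ S.erase p, ((-1:ℤ) ^ ((p' - 1) / 2) * (p':ℤ))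
    with hedef
  have hd1e : d1 = (p:ℤ) * e := by
    rw [hd1, ← Finset.mul_prod_erase S _ hpS, hedef]
    ring
  have hpe : ¬ ((p:ℤ) ∣ e) := by
    intro h
    rcases hprimeZ.dvd_mul.mp h with h' | h'
    · exact hprimeZ.not_unit (isUnit_of_dvd_unit h' ((isUnit_one.neg).pow _))
    · refine not_dvd_starprod p hp1 (S.erase p)
        (fun q hq => (hS q (Finset.mem_of_mem_erase hq)).1)
        (fun q hq => (Finset.mem_erase.mp hq).1) h'
  have hpd2 : ¬ ((p:ℤ) ∣ d2) := hpd2all p hpS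
  -- the nonsquare conditions
  have hns : ¬ IsSquare ((-d2 : ℤ) : ZMod p) := by
    refine (legendreSym.eq_neg_one_iff p).mp ?_
    rw [jacobiSym.legendreSym.to_jacobiSym]
    exact hpbad
  have h1sq : ¬ ∃ r : ℚ, r ^ 2 = (d1 : ℚ) := by
    rw [hd1e]
    exact not_rat_square p hp1 e hpe
  have h2sq : ¬ ∃ r : ℚ, r ^ 2 = (d2 : ℚ) := by
    obtain ⟨q0, hq0⟩ := hT0
    have hq0p : q0.Prime := (hT q0 hq0).1
    set f : ℤ := (-1:ℤ) ^ ((q0 - 1) / 2) * ∏ q ∈ T.erase q0, ((-1:ℤ) ^ ((q - 1) / 2) * (q:ℤ))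
      with hfdef
    have hd2f : d2 = (q0:ℤ) * f := by
      rw [hd2, ← Finset.mul_prod_erase T _ hq0, hfdef]
      ring
    have hq0f : ¬ ((q0:ℤ) ∣ f) := by
      intro h
      have hq0Z : Prime ((q0:ℤ)) := Nat.prime_iff_prime_int.mp hq0p
      rcases hq0Z.dvd_mul.mp h with h' | h'
      · exact hq0Z.not_unit (isUnit_of_dvd_unit h' ((isUnit_one.neg).pow _))
      · refine not_dvd_starprod q0 hq0p (T.erase q0)
          (fun q hq => (hT q (Finset.mem_of_mem_erase hq)).1)
          (fun q hq => (Finset.mem_erase.mp hq).1) h'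
    rw [hd2f]
    exact not_rat_square q0 hq0p f hq0f
  have h12sq : ¬ ∃ r : ℚ, r ^ 2 = ((d1 * d2 : ℤ) : ℚ) := by
    have hped2 : ¬ ((p:ℤ) ∣ e * d2) := by
      intro h
      rcases hprimeZ.dvd_mul.mp h with h' | h'
      · exact hpe h'
      · exact hpd2 h'
    rw [hd1e, mul_assoc]
    exact not_rat_square p hp1 (e * d2) hped2
  -- main argument
  intro L _ _ _ hiso _
  rintro ⟨⟨x, hx⟩, ⟨y, hy⟩⟩
  obtain ⟨φ⟩ := hiso
  obtain ⟨a0, a1, a2, a3, b0, b1, b2, b3, E1, E3, E5, E6, E7, E8⟩ :=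
    galois_system d1 d2 (ne_of_gt hd1pos) (ne_of_gt hd2pos) h1sq h2sq h12sq L φ x y hx hy
  exact key_rat p d1 e d2 hd1e hpe hpd2 hns a0 a1 a2 a3 b0 b1 b2 b3 E1 E3 E5 E6 E7 E8
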